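/- Let σ be a primitive sequence of substitutions over a finite alphabet A and let w be a limit sequence of σ. Then the S-adic system (X_w, Σ), where X_w is the shift-orbit closure of w in A^ℕ, is minimal: every orbit is dense in X_w. -/

import Mathlib

/-- The image of an infinite sequence under a (nonerasing) substitution. -/
def subApplyG {A : Type*} (s : A → List A) (u : ℕ → A) (n : ℕ) : A :=
  (((List.range (n + 1)).map u).flatMap s).getD n (u 0)

/-- The incidence matrix of a substitution. -/
def incMatG {A : Type*} [DecidableEq A] (s : A → List A) : Matrix A A ℕ :=
  Matrix.of fun i j => (s j).count i

/-- Primitivity of a sequence of substitutions. -/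
def PrimitiveSeq {A : Type*} [Fintype A] [DecidableEq A] (s : ℕ → A → List A) : Prop :=
  ∀ m : ℕ, ∃ n > m, ∀ i j : A,
    0 < (((List.range (n - m)).map fun k => incMatG (s (m + k))).prod) i j

/-- `w` is a limit sequence (S-adic sequence) for the directive sequence `s`. -/
def IsLimitSeq {A : Type*} (s : ℕ → A → List A) (w : ℕ → A) : Prop :=
  ∃ ws : ℕ → ℕ → A, ws 0 = w ∧ ∀ n, ws n = subApplyG (s n) (ws (n + 1))

/-- The shift-orbit of a sequence. -/
def orbitOf {A : Type*} (w : ℕ → A) : Set (ℕ → A) := {v | ∃ k : ℕ, v = fun n => w (n + k)}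

namespace SAdic

variable {A : Type*}

/-- Prefix of a sequence as a list. -/
def pref (u : ℕ → A) (N : ℕ) : List A := (List.range N).map u

@[simp] lemma length_pref (u : ℕ → A) (N : ℕ) : (pref u N).length = N := by
  simp [pref]

lemma getElem_pref (u : ℕ → A) {N i : ℕ} (h : i < (pref u N).length) :
    (pref u N)[i] = u i := by
  simp [pref]

lemma pref_prefix (u : ℕ → A) {M N : ℕ} (h : M ≤ N) : pref u M <+: pref u N := by
  obtain ⟨t, rfl⟩ := Nat.exists_eq_add_of_le h
  simp only [pref]
  rw [List.range_add, List.map_append]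
  exact List.prefix_append _ _

lemma length_flatMap_ge (f : A → List A) (hf : ∀ a, f a ≠ []) (l : List A) :
    l.length ≤ (l.flatMap f).length := by
  induction l with
  | nil => simp
  | cons a l ih =>
    rw [List.flatMap_cons, List.length_append, List.length_cons]
    have : 1 ≤ (f a).length := List.length_pos_iff.mpr (hf a)
    omega

lemma length_flatMap_ge_mul {L : ℕ} (f : A → List A) (l : List A)
    (hf : ∀ a ∈ l, L ≤ (f a).length) : l.length * L ≤ (l.flatMap f).length := by
  induction l with
  | nil => simp
  | cons a l ih =>
    rw [List.flatMap_cons, List.length_append, List.length_cons]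
    have h1 := hf a (List.mem_cons_self)
    have h2 := ih (fun b hb => hf b (List.mem_cons_of_mem a hb))
    nlinarith

lemma isPrefix_flatMap {l l' : List A} (f : A → List A) (h : l <+: l') :
    l.flatMap f <+: l'.flatMap f := by
  obtain ⟨t, rfl⟩ := h
  rw [List.flatMap_append]
  exact List.prefix_append _ _

/-- Main characterization: the flatMap of any prefix agrees with `subApplyG`. -/
lemma flatMap_pref_agrees (f : A → List A) (hf : ∀ a, f a ≠ []) (u : ℕ → A)
    (N i : ℕ) (hi : i < ((pref u N).flatMap f).length) (d : A) :
    ((pref u N).flatMap f).getD i d = subApplyG f u i := by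
  have hlen : i < ((pref u (i + 1)).flatMap f).length := by
    have := length_flatMap_ge f hf (pref u (i + 1))
    rw [length_pref] at this; omega
  rw [subApplyG]
  have hd : (((List.range (i + 1)).map u).flatMap f) = (pref u (i + 1)).flatMap f := rfl
  rw [hd, List.getD_eq_getElem _ _ hi, List.getD_eq_getElem _ _ hlen]
  rcases le_total N (i + 1) with h | h
  · exact ((isPrefix_flatMap f (pref_prefix u h)).getElem hi).symm ▸
      (isPrefix_flatMap f (pref_prefix u h)).getElem hi
  · exact ((isPrefix_flatMap f (pref_prefix u h)).getElem hlen).symm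

end SAdic

namespace SAdic
variable {A : Type*}

/-- Composition of substitutions. -/
def compSub (f g : A → List A) (a : A) : List A := (g a).flatMap f

lemma compSub_ne (f g : A → List A) (hf : ∀ a, f a ≠ []) (hg : ∀ a, g a ≠ []) :
    ∀ a, compSub f g a ≠ [] := by
  intro a
  have h1 := length_flatMap_ge f hf (g a)
  have h2 : 0 < (g a).length := List.length_pos_iff.mpr (hg a)
  rw [compSub, ← List.length_pos_iff]
  omega

lemma pref_eq_of_agrees (v : ℕ → A) (l : List A)
    (h : ∀ i (hi : i < l.length), l[i] = v i) : l = pref v l.length := by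
  apply List.ext_getElem (by simp)
  intro i h1 h2
  rw [getElem_pref v h2, h i h1]

lemma subApplyG_comp (f g : A → List A) (hf : ∀ a, f a ≠ []) (hg : ∀ a, g a ≠ [])
    (u : ℕ → A) (i : ℕ) :
    subApplyG (compSub f g) u i = subApplyG f (subApplyG g u) i := by
  set L : List A := (pref u (i + 1)).flatMap g with hL
  have hLlen : i + 1 ≤ L.length := by
    rw [hL]
    have := length_flatMap_ge g hg (pref u (i + 1)); rw [length_pref] at this; omega
  have hLeq : L = pref (subApplyG g u) L.length := by
    apply pref_eq_of_agrees
    intro j hj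
    rw [← List.getD_eq_getElem _ (u 0) hj]
    exact flatMap_pref_agrees g hg u (i + 1) j hj (u 0)
  have key : (pref u (i + 1)).flatMap (compSub f g) = L.flatMap f := by
    rw [hL]
    induction (pref u (i + 1)) with
    | nil => simp
    | cons a l ih => simp [compSub, List.flatMap_cons, List.flatMap_append, ih]
  have hlen2 : i < (L.flatMap f).length := by
    have := length_flatMap_ge f hf L; omega
  have h1 : subApplyG (compSub f g) u i
      = ((pref u (i + 1)).flatMap (compSub f g)).getD i (u 0) := by
    have hlen : i < ((pref u (i + 1)).flatMap (compSub f g)).length := by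
      have := length_flatMap_ge (compSub f g) (compSub_ne f g hf hg) (pref u (i + 1))
      rw [length_pref] at this; omega
    exact (flatMap_pref_agrees (compSub f g) (compSub_ne f g hf hg) u (i + 1) i hlen (u 0)).symm
  rw [h1, key]
  have := flatMap_pref_agrees f hf (subApplyG g u) L.length i (by rw [← hLeq]; exact hlen2) (u 0)
  rw [← hLeq] at this
  exact this

/-- Product of the substitutions `s 0, …, s (m-1)`. -/
def prodSub (s : ℕ → A → List A) : ℕ → A → List A
  | 0 => fun a => [a]
  | m + 1 => compSub (prodSub s m) (s m)

lemma prodSub_ne (s : ℕ → A → List A) (hne : ∀ n a, s n a ≠ []) :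
    ∀ m a, prodSub s m a ≠ [] := by
  intro m
  induction m with
  | zero => simp [prodSub]
  | succ m ih => exact compSub_ne _ _ ih (hne m)

lemma subApplyG_id (u : ℕ → A) (i : ℕ) : subApplyG (fun a => [a]) u i = u i := by
  rw [subApplyG]
  have h : ((List.range (i + 1)).map u).flatMap (fun a => [a]) = (List.range (i + 1)).map u := by
    simp
  rw [h, List.getD_eq_getElem]
  · simp
  · simp

/-- Product of the substitutions `s m, …, s (m+t-1)`. -/
def prodFrom (s : ℕ → A → List A) (m : ℕ) : ℕ → A → List A
  | 0 => fun a => [a]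
  | t + 1 => compSub (prodFrom s m t) (s (m + t))

lemma prodFrom_ne (s : ℕ → A → List A) (hne : ∀ n a, s n a ≠ []) (m : ℕ) :
    ∀ t a, prodFrom s m t a ≠ [] := by
  intro t
  induction t with
  | zero => simp [prodFrom]
  | succ t ih => exact compSub_ne _ _ ih (hne (m + t))

lemma compSub_id (f : A → List A) : compSub f (fun a => [a]) = f := by
  funext a; simp [compSub]

lemma compSub_assoc (f g h : A → List A) :
    compSub (compSub f g) h = compSub f (compSub g h) := by
  funext a
  simp only [compSub]
  induction h a with
  | nil => simp
  | cons b l ih => simp [compSub, List.flatMap_cons, List.flatMap_append, ih]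

lemma prodSub_decomp (s : ℕ → A → List A) (m : ℕ) :
    ∀ t, prodSub s (m + t) = compSub (prodSub s m) (prodFrom s m t) := by
  intro t
  induction t with
  | zero => simp [prodFrom, compSub_id]
  | succ t ih =>
    show prodSub s (m + t + 1) = _
    rw [prodSub, ih, compSub_assoc]
    rfl

end SAdic

namespace SAdic
variable {A : Type*} [Fintype A] [DecidableEq A]

lemma count_flatMap (f : A → List A) (i : A) (l : List A) :
    ((l.flatMap f).count i) = ∑ k : A, (f k).count i * l.count k := by
  induction l with
  | nil => simp
  | cons a l ih =>
    rw [List.flatMap_cons, List.count_append, ih]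
    have : ∀ k : A, (f k).count i * (a :: l).count k
        = (f k).count i * l.count k + if k = a then (f a).count i else 0 := by
      intro k
      rw [List.count_cons]
      rcases eq_or_ne k a with h | h
      · subst h; simp [Nat.mul_add]
      · simp [h, Ne.symm h]
    rw [Finset.sum_congr rfl (fun k _ => this k), Finset.sum_add_distrib,
      Finset.sum_ite_eq' Finset.univ a fun _ => (f a).count i]
    simp [Nat.add_comm]

lemma incMatG_comp (f g : A → List A) :
    incMatG (compSub f g) = incMatG f * incMatG g := by
  ext i j
  rw [Matrix.mul_apply]
  simp only [incMatG, Matrix.of_apply, compSub]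
  rw [count_flatMap]

lemma incMatG_id : incMatG (fun a : A => [a]) = 1 := by
  ext i j
  simp only [incMatG, Matrix.of_apply, List.count_singleton, Matrix.one_apply]
  rcases eq_or_ne i j with h | h
  · simp [h]
  · simp [h, Ne.symm h]

lemma incMatG_prodFrom (s : ℕ → A → List A) (m : ℕ) : ∀ t,
    incMatG (prodFrom s m t) = ((List.range t).map fun k => incMatG (s (m + k))).prod := by
  intro t
  induction t with
  | zero => simpa [prodFrom] using incMatG_id
  | succ t ih =>
    rw [prodFrom, incMatG_comp, ih, List.range_succ, List.map_append, List.prod_append]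
    simp

lemma mem_prodFrom_of_prim (s : ℕ → A → List A) {m n : ℕ}
    (hpos : ∀ i j : A,
      0 < (((List.range (n - m)).map fun k => incMatG (s (m + k))).prod) i j)
    (i j : A) : i ∈ prodFrom s m (n - m) j := by
  have := hpos i j
  rw [← incMatG_prodFrom] at this
  simp only [incMatG, Matrix.of_apply] at this
  exact List.count_pos_iff.mp this

lemma growth (s : ℕ → A → List A) (hne : ∀ n a, s n a ≠ [])
    (hprim : ∀ m : ℕ, ∃ n > m, ∀ i j : A,
      0 < (((List.range (n - m)).map fun k => incMatG (s (m + k))).prod) i j)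
    (hc : 1 < Fintype.card A) :
    ∀ L, ∃ m, ∀ a, L ≤ (prodSub s m a).length := by
  intro L
  induction L with
  | zero => exact ⟨0, fun a => Nat.zero_le _⟩
  | succ L ih =>
    obtain ⟨m, hm⟩ := ih
    rcases Nat.eq_zero_or_pos L with rfl | hL
    · exact ⟨m, fun a => List.length_pos_iff.mpr (prodSub_ne s hne m a)⟩
    · obtain ⟨n, hn, hpos⟩ := hprim m
      refine ⟨n, fun a => ?_⟩
      have hdecomp : prodSub s n = compSub (prodSub s m) (prodFrom s m (n - m)) := by
        have := prodSub_decomp s m (n - m)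
        rwa [Nat.add_sub_cancel' (le_of_lt hn)] at this
      have hmem : ∀ i, i ∈ prodFrom s m (n - m) a :=
        fun i => mem_prodFrom_of_prim s hpos i a
      obtain ⟨b, c, hbc⟩ := Fintype.exists_pair_of_one_lt_card hc
      have h2 : 2 ≤ (prodFrom s m (n - m) a).length := by
        have hsub : ({b, c} : Finset A) ⊆ (prodFrom s m (n - m) a).toFinset := by
          intro x hx
          simp only [Finset.mem_insert, Finset.mem_singleton] at hx
          rcases hx with rfl | rfl <;> simp [hmem]
        calc 2 = ({b, c} : Finset A).card := by
              rw [Finset.card_insert_of_notMem (by simp [hbc]), Finset.card_singleton]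
          _ ≤ (prodFrom s m (n - m) a).toFinset.card := Finset.card_le_card hsub
          _ ≤ _ := List.toFinset_card_le _
      have hmul := length_flatMap_ge_mul (prodSub s m) (prodFrom s m (n - m) a)
        (fun b _ => hm b)
      have : 2 * L ≤ (prodFrom s m (n - m) a).length * L :=
        Nat.mul_le_mul_right L h2
      rw [hdecomp]
      show L + 1 ≤ ((prodFrom s m (n - m) a).flatMap (prodSub s m)).length
      omega

lemma limit_eq (s : ℕ → A → List A) (hne : ∀ n a, s n a ≠ []) {w : ℕ → A} {ws : ℕ → ℕ → A}
    (h0 : ws 0 = w) (hrec : ∀ n, ws n = subApplyG (s n) (ws (n + 1))) :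
    ∀ m i, w i = subApplyG (prodSub s m) (ws m) i := by
  intro m
  induction m with
  | zero =>
    intro i
    rw [show prodSub s 0 = fun a : A => [a] from rfl, subApplyG_id, h0]
  | succ m ih =>
    intro i
    rw [ih i, hrec m, ← subApplyG_comp _ _ (prodSub_ne s hne m) (hne m)]
    rfl

/-- Position where block `t` starts in the infinite concatenation. -/
def lenUpTo (f : A → List A) (v : ℕ → A) (t : ℕ) : ℕ := ((pref v t).flatMap f).length

lemma lenUpTo_zero (f : A → List A) (v : ℕ → A) : lenUpTo f v 0 = 0 := by
  simp [lenUpTo, pref]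

lemma lenUpTo_succ (f : A → List A) (v : ℕ → A) (t : ℕ) :
    lenUpTo f v (t + 1) = lenUpTo f v t + (f (v t)).length := by
  simp only [lenUpTo, pref, List.range_succ, List.map_append, List.flatMap_append,
    List.length_append, List.map_singleton, List.flatMap_singleton]

lemma le_lenUpTo (f : A → List A) (hf : ∀ a, f a ≠ []) (v : ℕ → A) (t : ℕ) :
    t ≤ lenUpTo f v t := by
  have := length_flatMap_ge f hf (pref v t)
  rwa [length_pref] at this

lemma window (f : A → List A) (hf : ∀ a, f a ≠ []) (v w : ℕ → A)
    (hwv : ∀ i, w i = subApplyG f v i) (t : ℕ) (d : A) :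
    ∀ i < (f (v t)).length, w (lenUpTo f v t + i) = (f (v t)).getD i d := by
  intro i hi
  have hsplit : (pref v (t + 1)).flatMap f = (pref v t).flatMap f ++ f (v t) := by
    simp only [pref, List.range_succ, List.map_append, List.flatMap_append,
      List.map_singleton, List.flatMap_singleton]
  have hlen : lenUpTo f v t + i < ((pref v (t + 1)).flatMap f).length := by
    rw [hsplit, List.length_append]
    exact Nat.add_lt_add_left hi _
  rw [hwv, ← flatMap_pref_agrees f hf v (t + 1) (lenUpTo f v t + i) hlen d, hsplit]
  rw [show lenUpTo f v t = ((pref v t).flatMap f).length from rfl]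
  rw [List.getD_append_right _ _ _ _ (Nat.le_add_right _ _)]
  congr 1
  omega

/-- Uniform recurrence: every window of bounded size in `w` contains each prefix of `w`. -/
lemma key_recurrence (s : ℕ → A → List A) (hne : ∀ n a, s n a ≠ [])
    (hprim : ∀ m : ℕ, ∃ n > m, ∀ i j : A,
      0 < (((List.range (n - m)).map fun k => incMatG (s (m + k))).prod) i j)
    {w : ℕ → A} {ws : ℕ → ℕ → A}
    (h0 : ws 0 = w) (hrec : ∀ n, ws n = subApplyG (s n) (ws (n + 1))) :
    ∀ L, ∃ K, ∀ p, ∃ q ≤ K, ∀ i < L, w (p + q + i) = w i := by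
  intro L
  by_cases hc : 1 < Fintype.card A
  swap
  · -- subsingleton alphabet: trivial
    have hone : Fintype.card A ≤ 1 := by omega
    have : Subsingleton A := Fintype.card_le_one_iff_subsingleton.mp hone
    exact ⟨0, fun p => ⟨0, le_refl 0, fun i _ => Subsingleton.elim _ _⟩⟩
  -- main case
  obtain ⟨m, hm⟩ := growth s hne hprim hc L
  obtain ⟨n, hn, hpos⟩ := hprim m
  have hdecomp : prodSub s n = compSub (prodSub s m) (prodFrom s m (n - m)) := by
    have := prodSub_decomp s m (n - m)
    rwa [Nat.add_sub_cancel' (le_of_lt hn)] at this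
  set d := w 0 with hd
  set a₀ := ws m 0 with ha₀
  -- the prefix of w of length L is a prefix of prodSub s m a₀
  have hprefix : ∀ i < L, (prodSub s m a₀).getD i d = w i := by
    intro i hi
    have h1 : (pref (ws m) 1).flatMap (prodSub s m) = prodSub s m a₀ := by
      simp [pref, List.range_succ, ha₀]
    have hi' : i < ((pref (ws m) 1).flatMap (prodSub s m)).length := by
      rw [h1]; exact lt_of_lt_of_le hi (hm a₀)
    have := flatMap_pref_agrees (prodSub s m) (prodSub_ne s hne m) (ws m) 1 i hi' d
    rw [h1] at this
    rw [this, ← limit_eq s hne h0 hrec m i]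
  -- bound on block lengths
  set K₀ := Finset.univ.sup (fun c : A => (prodSub s n c).length) with hK₀
  have hK : ∀ c : A, (prodSub s n c).length ≤ K₀ :=
    fun c => Finset.le_sup (f := fun c : A => (prodSub s n c).length) (Finset.mem_univ c)
  refine ⟨K₀ + K₀, fun p => ?_⟩
  -- find the block containing position p
  set F := prodSub s n with hF
  set v := ws n with hv
  have hwF : ∀ i, w i = subApplyG F v i := limit_eq s hne h0 hrec n
  have hFne : ∀ a, F a ≠ [] := prodSub_ne s hne n
  have hex : ∃ t, p ≤ lenUpTo F v t := ⟨p, le_lenUpTo F hFne v p⟩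
  obtain ⟨t, h1, h2⟩ : ∃ t, p ≤ lenUpTo F v t ∧ lenUpTo F v t ≤ p + K₀ := by
    refine ⟨Nat.find hex, Nat.find_spec hex, ?_⟩
    rcases Nat.eq_zero_or_pos (Nat.find hex) with h | h
    · rw [h, lenUpTo_zero]; omega
    · have hmin : ¬ p ≤ lenUpTo F v (Nat.find hex - 1) := Nat.find_min hex (by omega)
      have hs := lenUpTo_succ F v (Nat.find hex - 1)
      rw [show Nat.find hex - 1 + 1 = Nat.find hex by omega] at hs
      have hb := hK (v (Nat.find hex - 1))
      omega
  set c := v t with hcdef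
  have ha₀mem : a₀ ∈ prodFrom s m (n - m) c := mem_prodFrom_of_prim s hpos a₀ c
  obtain ⟨l1, l2, hsplit⟩ := List.append_of_mem ha₀mem
  set r := (l1.flatMap (prodSub s m)).length with hr
  have hFc : F c = l1.flatMap (prodSub s m) ++ (prodSub s m a₀ ++ l2.flatMap (prodSub s m)) := by
    rw [hdecomp]
    show (prodFrom s m (n - m) c).flatMap (prodSub s m) = _
    rw [hsplit, List.flatMap_append, List.flatMap_cons]
  have hrL : r + L ≤ (F c).length := by
    rw [hFc]
    simp only [List.length_append]
    have := hm a₀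
    omega
  have hblock : ∀ i < L, (F c).getD (r + i) d = w i := by
    intro i hi
    rw [hFc, List.getD_append_right _ _ _ _ (Nat.le_add_right r i)]
    rw [show r + i - (l1.flatMap (prodSub s m)).length = i by omega]
    rw [List.getD_append _ _ _ i (lt_of_lt_of_le hi (hm a₀))]
    exact hprefix i hi
  refine ⟨(lenUpTo F v t - p) + r, by have := hK c; omega, fun i hi => ?_⟩
  have hwin := window F hFne v w hwF t d (r + i) (by have := hK c; rw [← hcdef]; omega)
  rw [← hcdef] at hwin
  rw [show p + ((lenUpTo F v t - p) + r) + i = lenUpTo F v t + (r + i) by omega]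
  rw [hwin]
  exact hblock i hi

end SAdic

namespace SAdic
variable {A : Type*} [TopologicalSpace A] [DiscreteTopology A]

lemma mem_closure_iff_agree {S : Set (ℕ → A)} {x : ℕ → A} :
    x ∈ closure S ↔ ∀ L, ∃ y ∈ S, ∀ i < L, y i = x i := by
  constructor
  · intro h L
    have hU : IsOpen {y : ℕ → A | ∀ i < L, y i = x i} := by
      have : {y : ℕ → A | ∀ i < L, y i = x i}
          = ⋂ i : Fin L, (fun y : ℕ → A => y i.val) ⁻¹' {x i.val} := by
        ext y
        simp only [Set.mem_setOf_eq, Set.mem_iInter, Set.mem_preimage, Set.mem_singleton_iff]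
        exact ⟨fun h i => h i.val i.isLt, fun h i hi => h ⟨i, hi⟩⟩
      rw [this]
      exact isOpen_iInter_of_finite fun i =>
        (continuous_apply i.val).isOpen_preimage _ (isOpen_discrete _)
    obtain ⟨y, hy1, hy2⟩ := mem_closure_iff.mp h _ hU (fun i _ => rfl)
    exact ⟨y, hy2, hy1⟩
  · intro h
    rw [mem_closure_iff]
    intro U hU hxU
    obtain ⟨I, u, hu, hsub⟩ := isOpen_pi_iff.mp hU x hxU
    obtain ⟨y, hyS, hagree⟩ := h (I.sup id + 1)
    refine ⟨y, hsub fun i hi => ?_, hyS⟩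
    rw [hagree i (Nat.lt_succ_of_le (Finset.le_sup (f := id) hi))]
    exact (hu i hi).2

lemma shift_mem_closure_orbit {z x : ℕ → A} (hx : x ∈ closure (orbitOf z)) (k : ℕ) :
    (fun n => x (n + k)) ∈ closure (orbitOf z) := by
  rw [mem_closure_iff_agree] at hx ⊢
  intro L
  obtain ⟨y, ⟨j, rfl⟩, hagree⟩ := hx (L + k)
  refine ⟨fun n => z (n + (k + j)), ⟨k + j, rfl⟩, fun i hi => ?_⟩
  have := hagree (i + k) (by omega)
  simp only at this ⊢
  rw [show i + (k + j) = i + k + j by omega, this]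

end SAdic

open SAdic

/-- If `σ` is primitive and `w` a limit sequence of `σ`, the S-adic system
`(X_w, Σ)` is minimal: every orbit is dense. -/
theorem stmt13 {A : Type*} [Fintype A] [DecidableEq A]
    [TopologicalSpace A] [DiscreteTopology A]
    (s : ℕ → A → List A) (hne : ∀ n a, s n a ≠ []) (hprim : PrimitiveSeq s)
    (w : ℕ → A) (hw : IsLimitSeq s w) :
    ∀ x ∈ closure (orbitOf w), closure (orbitOf x) = closure (orbitOf w) := by
  intro x hx
  obtain ⟨ws, h0, hrec⟩ := hw
  apply Set.Subset.antisymm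
  · -- orbit of x stays in closure of orbit of w
    apply closure_minimal _ isClosed_closure
    rintro y ⟨k, rfl⟩
    exact shift_mem_closure_orbit hx k
  · -- w is in the closure of the orbit of x
    have hwx : w ∈ closure (orbitOf x) := by
      rw [mem_closure_iff_agree]
      intro L
      obtain ⟨K, hK⟩ := key_recurrence s hne hprim h0 hrec L
      obtain ⟨y, ⟨j, rfl⟩, hagree⟩ := (mem_closure_iff_agree).mp hx (K + L)
      obtain ⟨q, hqK, hq⟩ := hK j
      refine ⟨fun n => x (n + q), ⟨q, rfl⟩, fun i hi => ?_⟩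
      simp only
      have h1 := hagree (i + q) (by omega)
      simp only at h1
      rw [← h1, show i + q + j = j + q + i by omega]
      exact hq i hi
    apply closure_minimal _ isClosed_closure
    rintro y ⟨k, rfl⟩
    exact shift_mem_closure_orbit hwx k
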